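/- The explicit functions p₁(t) = B exp((1/(2D))(D²A₁ - A₁) sgn(C₁) e^{-|C₁|} t), p₂ = p₁/D, r₁ = A₁/p₁, r₂ = A₁/p₂, q₁(t) = -[A₁/3 + (1/(2D))(D²A₁ + A₁)e^{-|C₁|}] t + C₁/2, q₂(t) = q₁(t) - C₁, with nonzero real constants B, C₁, D and A₁ ∈ ℝ, satisfy the two-peakon ODE system p₁' = ½p₁(p₁r₂ - p₂r₁)sgn(q₁-q₂)e^{-|q₁-q₂|}, p₂' = ½p₂(p₂r₁ - p₁r₂)sgn(q₂-q₁)e^{-|q₂-q₁|}, q₁' = -⅓p₁r₁ - ½(p₁r₂ + p₂r₁)e^{-|q₁-q₂|}, q₂' = -⅓p₂r₂ - ½(p₁r₂ + p₂r₁)e^{-|q₂-q₁|}, r₁' = -½r₁(p₁r₂-p₂r₁)sgn(q₁-q₂)e^{-|q₁-q₂|}, r₂' = -½r₂(p₂r₁-p₁r₂)sgn(q₂-q₁)e^{-|q₂-q₁|}. -/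

import Mathlib

noncomputable section

/-- Equal-constants (`A₁ = A₂`) explicit two-peakon solution of the two-peakon dynamical
system of the two-component cubic Camassa–Holm equation with `b = 0`. -/
theorem two_peakon_explicit_solution_equal_constants (A₁ B C₁ D : ℝ)
    (hB : B ≠ 0) (hC : C₁ ≠ 0) (hD : D ≠ 0) :
    let p₁ : ℝ → ℝ := fun t =>
      B * Real.exp ((1 / (2 * D)) * (D ^ 2 * A₁ - A₁) * Real.sign C₁ * Real.exp (-|C₁|) * t)
    let p₂ : ℝ → ℝ := fun t => p₁ t / D
    let r₁ : ℝ → ℝ := fun t => A₁ / p₁ t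
    let r₂ : ℝ → ℝ := fun t => A₁ / p₂ t
    let q₁ : ℝ → ℝ := fun t =>
      -((1 / 3) * A₁ + (1 / (2 * D)) * (D ^ 2 * A₁ + A₁) * Real.exp (-|C₁|)) * t + C₁ / 2
    let q₂ : ℝ → ℝ := fun t => q₁ t - C₁
    ∀ t : ℝ,
      HasDerivAt p₁ ((1 / 2) * p₁ t * (p₁ t * r₂ t - p₂ t * r₁ t) *
        Real.sign (q₁ t - q₂ t) * Real.exp (-|q₁ t - q₂ t|)) t ∧
      HasDerivAt p₂ ((1 / 2) * p₂ t * (p₂ t * r₁ t - p₁ t * r₂ t) *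
        Real.sign (q₂ t - q₁ t) * Real.exp (-|q₂ t - q₁ t|)) t ∧
      HasDerivAt q₁ (-(1 / 3) * (p₁ t * r₁ t)
        - (1 / 2) * (p₁ t * r₂ t + p₂ t * r₁ t) * Real.exp (-|q₁ t - q₂ t|)) t ∧
      HasDerivAt q₂ (-(1 / 3) * (p₂ t * r₂ t)
        - (1 / 2) * (p₁ t * r₂ t + p₂ t * r₁ t) * Real.exp (-|q₂ t - q₁ t|)) t ∧
      HasDerivAt r₁ (-(1 / 2) * r₁ t * (p₁ t * r₂ t - p₂ t * r₁ t) *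
        Real.sign (q₁ t - q₂ t) * Real.exp (-|q₁ t - q₂ t|)) t ∧
      HasDerivAt r₂ (-(1 / 2) * r₂ t * (p₂ t * r₁ t - p₁ t * r₂ t) *
        Real.sign (q₂ t - q₁ t) * Real.exp (-|q₂ t - q₁ t|)) t := by
  intro p₁ p₂ r₁ r₂ q₁ q₂ t
  set k : ℝ := (1 / (2 * D)) * (D ^ 2 * A₁ - A₁) * Real.sign C₁ * Real.exp (-|C₁|) with hk
  have hE : Real.exp (k * t) ≠ 0 := Real.exp_ne_zero _
  have hP : p₁ t = B * Real.exp (k * t) := rfl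
  have hPne : p₁ t ≠ 0 := by rw [hP]; exact mul_ne_zero hB hE
  have hq12 : q₁ t - q₂ t = C₁ := by simp [q₂]
  have hq21 : q₂ t - q₁ t = -C₁ := by simp [q₂]
  have habs : |(-C₁)| = |C₁| := abs_neg C₁
  have hsgn : Real.sign (-C₁) = -Real.sign C₁ := by
    rcases hC.lt_or_gt with h | h
    · rw [Real.sign_of_pos (by linarith), Real.sign_of_neg h]; try ring
    · rw [Real.sign_of_neg (by linarith), Real.sign_of_pos h]; try ring
  -- key algebraic identities
  have hP2 : p₂ t = p₁ t / D := rfl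
  have hR1 : r₁ t = A₁ / p₁ t := rfl
  have hR2 : r₂ t = A₁ / p₂ t := rfl
  have h1 : p₁ t * r₂ t = A₁ * D := by
    rw [hR2, hP2]; field_simp; try ring
  have h2 : p₂ t * r₁ t = A₁ / D := by
    rw [hR1, hP2]; field_simp; try ring
  have h3 : p₁ t * r₁ t = A₁ := by rw [hR1]; field_simp; try ring
  have h4 : p₂ t * r₂ t = A₁ := by rw [hR2, mul_div_assoc', mul_comm, mul_div_assoc, div_self (div_ne_zero hPne hD), mul_one]
  -- derivatives
  have hkt : HasDerivAt (fun s : ℝ => k * s) k t := by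
    simpa using (hasDerivAt_id t).const_mul k
  have hp₁ : HasDerivAt p₁ (p₁ t * k) t := by
    have := hkt.exp.const_mul B
    refine this.congr_deriv ?_
    rw [hP]; ring
  have hp₂ : HasDerivAt p₂ (p₁ t * k / D) t := hp₁.div_const D
  have hr₁ : HasDerivAt r₁ ((0 * p₁ t - A₁ * (p₁ t * k)) / p₁ t ^ 2) t :=
    (hasDerivAt_const t A₁).div hp₁ hPne
  have hP₂ne : p₂ t ≠ 0 := div_ne_zero hPne hD
  have hr₂ : HasDerivAt r₂ ((0 * p₂ t - A₁ * (p₁ t * k / D)) / p₂ t ^ 2) t :=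
    (hasDerivAt_const t A₁).div hp₂ hP₂ne
  have hm : HasDerivAt (fun s : ℝ =>
      -((1 / 3) * A₁ + (1 / (2 * D)) * (D ^ 2 * A₁ + A₁) * Real.exp (-|C₁|)) * s)
      (-((1 / 3) * A₁ + (1 / (2 * D)) * (D ^ 2 * A₁ + A₁) * Real.exp (-|C₁|))) t := by
    have := (hasDerivAt_id t).const_mul
      (-((1 / 3) * A₁ + (1 / (2 * D)) * (D ^ 2 * A₁ + A₁) * Real.exp (-|C₁|)))
    simp only [mul_one] at this
    exact this
  have hq₁ : HasDerivAt q₁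
      (-((1 / 3) * A₁ + (1 / (2 * D)) * (D ^ 2 * A₁ + A₁) * Real.exp (-|C₁|))) t :=
    hm.add_const (C₁ / 2)
  refine ⟨?_, ?_, ?_, ?_, ?_, ?_⟩
  · convert hp₁ using 1
    rw [hq12, h1, h2, hk]; field_simp
  · convert hp₂ using 1
    rw [hq21, h1, h2, habs, hsgn, hP2, hk]; field_simp; ring
  · convert hq₁ using 1
    rw [hq12, h1, h2, h3]; field_simp; ring
  · refine (hq₁.sub_const C₁).congr_deriv ?_
    rw [hq21, h1, h2, h4, habs]; field_simp; ring
  · convert hr₁ using 1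
    rw [hq12, h1, h2, hR1, hk]; field_simp; ring
  · convert hr₂ using 1
    rw [hq21, h1, h2, habs, hsgn, hR2, hP2, hk]; field_simp; ring
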